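/- For every real r > 0, ∑_{n=1}^{∞} (−1)^{n−1}/(n² + r²) = (1/(2r²))·(1 − πr/sinh(πr)). -/

import Mathlib

open Real MeasureTheory intervalIntegral

noncomputable section

lemma exp_int_pi (m : ℤ) : Complex.exp (m * Real.pi * Complex.I) = (-1) ^ m := by
  rw [show (m : ℂ) * Real.pi * Complex.I = m * (Real.pi * Complex.I) by ring,
    Complex.exp_int_mul, Complex.exp_pi_mul_I]

lemma zneg (n : ℤ) : ((-1 : ℂ)) ^ (-n) = (-1) ^ n := by
  rw [zpow_neg, ← inv_zpow, inv_neg, inv_one]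

lemma keyint (r : ℝ) (hr : 0 < r) (n : ℤ) :
    (∫ x in (-Real.pi)..Real.pi, Complex.exp (-n * x * Complex.I) * Complex.cosh (r * x))
      = (((-1) ^ n * (2 * r * Real.sinh (Real.pi * r)) / ((n : ℝ) ^ 2 + r ^ 2) : ℝ) :) := by
  have h1 : (r : ℂ) - n * Complex.I ≠ 0 := by
    intro h; apply hr.ne'; simpa using congrArg Complex.re h
  have h2 : -(r : ℂ) - n * Complex.I ≠ 0 := by
    intro h
    have := congrArg Complex.re h
    simp at this
    exact hr.ne' this
  have key : ∀ x : ℝ, Complex.exp (-n * x * Complex.I) * Complex.cosh (r * x)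
      = (Complex.exp (((r : ℂ) - n * Complex.I) * x)
          + Complex.exp ((-(r : ℂ) - n * Complex.I) * x)) / 2 := by
    intro x
    rw [Complex.cosh, show Complex.exp (-n * x * Complex.I) * ((Complex.exp (r * x) + Complex.exp (-(r * x : ℂ))) / 2)
        = (Complex.exp (-n * x * Complex.I) * Complex.exp (r * x)
          + Complex.exp (-n * x * Complex.I) * Complex.exp (-(r * x : ℂ))) / 2 from by ring,
      ← Complex.exp_add, ← Complex.exp_add]
    ring_nf
  rw [intervalIntegral.integral_congr (fun x _ => key x), intervalIntegral.integral_div,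
    intervalIntegral.integral_add
      ((by fun_prop : Continuous fun x : ℝ => Complex.exp (((r : ℂ) - n * Complex.I) * x)).intervalIntegrable _ _)
      ((by fun_prop : Continuous fun x : ℝ => Complex.exp ((-(r : ℂ) - n * Complex.I) * x)).intervalIntegrable _ _),
    integral_exp_mul_complex h1, integral_exp_mul_complex h2]
  have e1 : Complex.exp (((r : ℂ) - n * Complex.I) * Real.pi)
      = Real.exp (Real.pi * r) * (-1) ^ n := by
    rw [show ((r : ℂ) - n * Complex.I) * Real.pi = ((Real.pi * r : ℝ) : ℂ) + ((-n : ℤ) : ℂ) * Real.pi * Complex.I from by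
      push_cast; ring, Complex.exp_add, exp_int_pi, zneg, ← Complex.ofReal_exp]
  have e2 : Complex.exp (((r : ℂ) - n * Complex.I) * (-Real.pi))
      = Real.exp (-(Real.pi * r)) * (-1) ^ n := by
    rw [show ((r : ℂ) - n * Complex.I) * (-Real.pi) = ((-(Real.pi * r) : ℝ) : ℂ) + ((n : ℤ) : ℂ) * Real.pi * Complex.I from by
      push_cast; ring, Complex.exp_add, exp_int_pi, ← Complex.ofReal_exp]
  have e3 : Complex.exp ((-(r : ℂ) - n * Complex.I) * Real.pi)
      = Real.exp (-(Real.pi * r)) * (-1) ^ n := by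
    rw [show (-(r : ℂ) - n * Complex.I) * Real.pi = ((-(Real.pi * r) : ℝ) : ℂ) + ((-n : ℤ) : ℂ) * Real.pi * Complex.I from by
      push_cast; ring, Complex.exp_add, exp_int_pi, zneg, ← Complex.ofReal_exp]
  have e4 : Complex.exp ((-(r : ℂ) - n * Complex.I) * (-Real.pi))
      = Real.exp (Real.pi * r) * (-1) ^ n := by
    rw [show (-(r : ℂ) - n * Complex.I) * (-Real.pi) = ((Real.pi * r : ℝ) : ℂ) + ((n : ℤ) : ℂ) * Real.pi * Complex.I from by
      push_cast; ring, Complex.exp_add, exp_int_pi, ← Complex.ofReal_exp]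
  simp only [Complex.ofReal_neg]
  rw [e1, e2, e3, e4, Real.sinh_eq]
  have h3 : ((n : ℂ) ^ 2 + (r : ℂ) ^ 2) ≠ 0 := by
    have : ((n : ℝ) ^ 2 + r ^ 2 : ℝ) ≠ 0 := by positivity
    exact_mod_cast this
  push_cast
  field_simp
  ring_nf
  simp [Complex.I_sq]

instance fact2pi : Fact (0 < 2 * Real.pi) := ⟨by positivity⟩

def Fc (r : ℝ) : C(AddCircle (2 * Real.pi), ℂ) :=
  ⟨AddCircle.liftIco (2 * Real.pi) (-Real.pi) (fun x => Complex.cosh (r * x)), by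
    apply AddCircle.liftIco_continuous
    · show Complex.cosh ((r : ℂ) * ((-Real.pi : ℝ) : ℂ)) = Complex.cosh ((r : ℂ) * ((-Real.pi + 2 * Real.pi : ℝ) : ℂ))
      rw [show (-Real.pi + 2 * Real.pi) = Real.pi from by ring]
      push_cast
      rw [mul_neg, Complex.cosh_neg]
    · exact Continuous.continuousOn (by fun_prop)⟩

lemma fc_coeff (r : ℝ) (hr : 0 < r) (n : ℤ) :
    fourierCoeff ⇑(Fc r) n
      = (((-1) ^ n * (r * Real.sinh (Real.pi * r)) / (Real.pi * ((n : ℝ) ^ 2 + r ^ 2)) : ℝ) : ℂ) := by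
  have h0 : ⇑(Fc r) = AddCircle.liftIco (2 * Real.pi) (-Real.pi) (fun x => Complex.cosh (r * x)) := rfl
  rw [h0, fourierCoeff_liftIco_eq, fourierCoeffOn_eq_integral,
    show (-Real.pi + 2 * Real.pi) = Real.pi from by ring]
  have hcong : Set.EqOn
      (fun x : ℝ => (fourier (-n) (x : AddCircle (Real.pi - -Real.pi)) : ℂ) • Complex.cosh (r * x))
      (fun x : ℝ => Complex.exp (-n * x * Complex.I) * Complex.cosh (r * x))
      (Set.uIcc (-Real.pi) Real.pi) := by
    intro x _
    simp only [smul_eq_mul, fourier_coe_apply]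
    congr 2
    have hpi : (Real.pi : ℂ) ≠ 0 := by
      exact_mod_cast Real.pi_ne_zero
    push_cast
    field_simp
    ring
  rw [intervalIntegral.integral_congr hcong, keyint r hr n, Complex.real_smul,
    ← Complex.ofReal_mul]
  congr 1
  have h4 : ((n : ℝ) ^ 2 + r ^ 2) ≠ 0 := by positivity
  field_simp
  ring

lemma znegR (n : ℤ) : ((-1 : ℝ)) ^ (-n) = (-1) ^ n := by
  rw [zpow_neg, ← inv_zpow, inv_neg, inv_one]

lemma base_nat (r : ℝ) (hr : 0 < r) :
    Summable (fun n : ℕ => 1 / (((n : ℝ) + 1) ^ 2 + r ^ 2)) := by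
  have h2 : Summable (fun n : ℕ => 1 / ((n : ℝ)) ^ 2) :=
    Real.summable_one_div_nat_pow.mpr one_lt_two
  have h3 := (summable_nat_add_iff (f := fun n : ℕ => 1 / ((n : ℝ)) ^ 2) 1).mpr h2
  have h4 : Summable (fun n : ℕ => 1 / (((n : ℝ) + 1)) ^ 2) :=
    h3.congr fun n => by push_cast; ring
  apply Summable.of_nonneg_of_le (fun n => by positivity) (fun n => ?_) h4
  apply one_div_le_one_div_of_le (by positivity)
  nlinarith [sq_nonneg r]

lemma base_nat0 (r : ℝ) (hr : 0 < r) :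
    Summable (fun n : ℕ => 1 / ((n : ℝ) ^ 2 + r ^ 2)) := by
  apply (summable_nat_add_iff 1).mp
  exact (base_nat r hr).congr fun n => by push_cast; ring

lemma base_int (r : ℝ) (hr : 0 < r) :
    Summable (fun n : ℤ => 1 / ((n : ℝ) ^ 2 + r ^ 2)) := by
  apply Summable.of_nat_of_neg
  · exact (base_nat0 r hr).congr fun n => by push_cast; ring
  · exact (base_nat0 r hr).congr fun n => by push_cast; ring

lemma coeff_summable (r : ℝ) (hr : 0 < r) :
    Summable (fun n : ℤ => fourierCoeff ⇑(Fc r) n) := by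
  have hs : 0 < Real.sinh (Real.pi * r) :=
    Real.sinh_pos_iff.mpr (by positivity)
  simp_rw [fc_coeff r hr]
  rw [Complex.summable_ofReal]
  have hb := (base_int r hr).mul_left (r * Real.sinh (Real.pi * r) / Real.pi)
  apply Summable.of_norm
  apply Summable.of_nonneg_of_le (fun n => norm_nonneg _) (fun n => ?_) hb
  have habs : |(-1 : ℝ) ^ n| = 1 := by
    rcases Int.even_or_odd n with h | h
    · rw [h.neg_one_zpow]; simp
    · rw [h.neg_one_zpow]; simp
  rw [Real.norm_eq_abs, abs_div, abs_mul, habs, one_mul,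
    abs_of_pos (show (0:ℝ) < r * Real.sinh (Real.pi * r) by positivity),
    abs_of_pos (show (0:ℝ) < Real.pi * ((n : ℝ) ^ 2 + r ^ 2) by positivity)]
  apply le_of_eq
  have h1 : ((n : ℝ) ^ 2 + r ^ 2) ≠ 0 := by positivity
  field_simp

lemma fourier_sum (r : ℝ) (hr : 0 < r) :
    HasSum (fun n : ℤ =>
      ((-1 : ℝ) ^ n * (r * Real.sinh (Real.pi * r)) / (Real.pi * ((n : ℝ) ^ 2 + r ^ 2)))) 1 := by
  have h := has_pointwise_sum_fourier_series_of_summable (coeff_summable r hr)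
    (0 : AddCircle (2 * Real.pi))
  have hF0 : (Fc r) (0 : AddCircle (2 * Real.pi)) = 1 := by
    show AddCircle.liftIco (2 * Real.pi) (-Real.pi) (fun x => Complex.cosh (r * x)) 0 = 1
    have h0 : ((0 : ℝ) : AddCircle (2 * Real.pi)) = 0 := rfl
    rw [← h0, AddCircle.liftIco_coe_apply
      (⟨by linarith [Real.pi_pos], by linarith [Real.pi_pos]⟩ : (0:ℝ) ∈ Set.Ico (-Real.pi) (-Real.pi + 2 * Real.pi))]
    simp
  simp_rw [fourier_eval_zero, smul_eq_mul, mul_one, fc_coeff r hr, hF0] at h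
  rw [show (1 : ℂ) = ((1 : ℝ) : ℂ) from by norm_num] at h
  exact Complex.hasSum_ofReal.mp h

theorem stmt_2 (r : ℝ) (hr : 0 < r) :
    ∑' n : ℕ, (-1 : ℝ) ^ n / (((n : ℝ) + 1) ^ 2 + r ^ 2)
      = 1 / (2 * r ^ 2) * (1 - Real.pi * r / Real.sinh (Real.pi * r)) := by
  have hpi := Real.pi_pos
  have hs : 0 < Real.sinh (Real.pi * r) := Real.sinh_pos_iff.mpr (by positivity)
  have hsum : Summable (fun n : ℕ => (-1 : ℝ) ^ n / (((n : ℝ) + 1) ^ 2 + r ^ 2)) := by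
    apply Summable.of_norm
    apply Summable.of_nonneg_of_le (fun n => norm_nonneg _) (fun n => ?_) (base_nat r hr)
    rw [Real.norm_eq_abs, abs_div, abs_pow, abs_neg, abs_one, one_pow,
      abs_of_pos (show (0:ℝ) < ((n : ℝ) + 1) ^ 2 + r ^ 2 by positivity)]
  set S := ∑' n : ℕ, (-1 : ℝ) ^ n / (((n : ℝ) + 1) ^ 2 + r ^ 2) with hSdef
  have hS : HasSum (fun n : ℕ => (-1 : ℝ) ^ n / (((n : ℝ) + 1) ^ 2 + r ^ 2)) S := hsum.hasSum
  set g : ℤ → ℝ := fun n => (-1 : ℝ) ^ n / ((n : ℝ) ^ 2 + r ^ 2) with hg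
  have hpart1 : HasSum (fun n : ℕ => g ((n : ℤ) + 1)) (-S) := by
    have he : (fun n : ℕ => g ((n : ℤ) + 1))
        = fun n : ℕ => -((-1 : ℝ) ^ n / (((n : ℝ) + 1) ^ 2 + r ^ 2)) := by
      funext n
      rw [hg]
      simp only
      rw [show ((n : ℤ) + 1) = ((n + 1 : ℕ) : ℤ) from by push_cast; ring, zpow_natCast]
      push_cast
      rw [pow_succ]
      ring
    rw [he]
    exact hS.neg
  have hnat1 : HasSum (fun n : ℕ => g n) (-S + 1 / r ^ 2) := by
    have := (hasSum_nat_add_iff (f := fun n : ℕ => g n) 1).mp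
      (hpart1.congr_fun fun n => by norm_num)
    simpa [hg] using this
  have hpart2 : HasSum (fun n : ℕ => g (-((n : ℤ) + 1))) (-S) := by
    have he : (fun n : ℕ => g (-((n : ℤ) + 1)))
        = fun n : ℕ => -((-1 : ℝ) ^ n / (((n : ℝ) + 1) ^ 2 + r ^ 2)) := by
      funext n
      rw [hg]
      simp only
      rw [znegR, show ((n : ℤ) + 1) = ((n + 1 : ℕ) : ℤ) from by push_cast; ring, zpow_natCast]
      push_cast
      rw [pow_succ]
      ring
    rw [he]
    exact hS.neg
  have hint : HasSum g ((-S + 1 / r ^ 2) + -S) :=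
    hnat1.of_nat_of_neg_add_one (hpart2.congr_fun fun n => by norm_num)
  have hg2 : HasSum g (Real.pi / (r * Real.sinh (Real.pi * r))) := by
    have hmul := (fourier_sum r hr).mul_left (Real.pi / (r * Real.sinh (Real.pi * r)))
    rw [mul_one] at hmul
    apply hmul.congr_fun fun n => ?_
    have h1 : ((n : ℝ) ^ 2 + r ^ 2) ≠ 0 := by positivity
    rw [hg]
    field_simp
  have E := hint.unique hg2
  have hSval : S = (1 / r ^ 2 - Real.pi / (r * Real.sinh (Real.pi * r))) / 2 := by linarith
  rw [hSval]
  field_simp
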